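/- Lower bound for hypervolume regret (packing argument): let K = {y ∈ ℝ^k : y ≥ 0, ‖y‖_2 ≤ 1}, whose Pareto frontier is the positive-orthant unit sphere S_+^{k−1}. There exists a constant c_k > 0 such that for every 0 < ε < 1/2 and every finite set Y_T ⊆ K of size T < c_k (1/ε)^{k−1}, the hypervolume regret satisfies HV_0(S_+^{k−1}) − HV_0(Y_T) ≥ c_k ε. Consequently HV_0(S_+^{k−1}) − HV_0(Y_T) = Ω(T^{−1/(k−1)}) for any T-point set Y_T ⊆ K. -/

import Mathlib

open MeasureTheory

/-- The Euclidean (ℓ_2) norm on `ℝ^k`. -/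
noncomputable def euclNorm {k : ℕ} (x : Fin k → ℝ) : ℝ :=
  Real.sqrt (∑ i, (x i) ^ 2)

/-- The region dominated by `S` with respect to the reference point `0`. -/
def dominatedRegion0 {k : ℕ} (S : Set (Fin k → ℝ)) : Set (Fin k → ℝ) :=
  {x | (∀ i, 0 ≤ x i) ∧ ∃ s ∈ S, ∀ i, x i ≤ s i}

/-- The positive-orthant part of the unit sphere, `S₊^{k-1}`. -/
def spherePlus (k : ℕ) : Set (Fin k → ℝ) :=
  {y | euclNorm y = 1 ∧ ∀ i, 0 ≤ y i}


/-- lower corner offset β -/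
noncomputable def bp (m : ℕ) : ℝ := 1 / (2 * (m + 1))

/-- grid sphere point -/
noncomputable def gp (m n : ℕ) (ε : ℝ) (v : Fin m → Fin n) : Fin (m + 1) → ℝ :=
  Fin.snoc (fun i => bp m + (v i : ℕ) * ε)
    (Real.sqrt (1 - ∑ i, (bp m + ((v i : ℕ) : ℝ) * ε) ^ 2))

lemma bp_pos (m : ℕ) : 0 < bp m := by
  have : (0:ℝ) < 2 * (m+1) := by positivity
  exact div_pos one_pos this

lemma bp_le_half (m : ℕ) : bp m ≤ 1/2 := by
  rw [bp, div_le_div_iff₀ (by positivity) (by norm_num)]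
  have : (1:ℝ) ≤ (m:ℝ) + 1 := by
    have : (0:ℝ) ≤ (m:ℝ) := Nat.cast_nonneg m
    linarith
  nlinarith

lemma nat_cast_abs_ge {a b : ℕ} (h : a ≠ b) : (1:ℝ) ≤ |(a:ℝ) - (b:ℝ)| := by
  rcases lt_or_gt_of_ne h with h' | h'
  · rw [abs_sub_comm, le_abs]
    left
    have : (a:ℝ) + 1 ≤ b := by exact_mod_cast Nat.succ_le_of_lt h'
    linarith
  · rw [le_abs]
    left
    have : (b:ℝ) + 1 ≤ a := by exact_mod_cast Nat.succ_le_of_lt h'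
    linarith

section Grid

variable {m n : ℕ} {ε : ℝ}

/-- bound on grid coordinates -/
lemma a_bounds (hε : 0 < ε) (hn : ((n:ℝ) - 1) * ε ≤ bp m) (v : Fin m → Fin n) (i : Fin m) :
    bp m ≤ bp m + ((v i : ℕ) : ℝ) * ε ∧ bp m + ((v i : ℕ) : ℝ) * ε ≤ 2 * bp m := by
  constructor
  · have : (0:ℝ) ≤ ((v i : ℕ) : ℝ) * ε := by positivity
    linarith
  · have hv : ((v i : ℕ) : ℝ) ≤ (n:ℝ) - 1 := by
      have : ((v i : ℕ) : ℝ) < n := by exact_mod_cast (v i).2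
      have h1 : (v i : ℕ) + 1 ≤ n := (v i).2
      have : ((v i : ℕ) : ℝ) + 1 ≤ n := by exact_mod_cast h1
      linarith
    have : ((v i : ℕ) : ℝ) * ε ≤ ((n:ℝ) - 1) * ε := by
      apply mul_le_mul_of_nonneg_right hv hε.le
    linarith

lemma S_bound (hε : 0 < ε) (hn : ((n:ℝ) - 1) * ε ≤ bp m) (v : Fin m → Fin n) :
    ∑ i, (bp m + ((v i : ℕ) : ℝ) * ε) ^ 2 ≤ 1/4 := by
  have h1 : ∑ i, (bp m + ((v i : ℕ) : ℝ) * ε) ^ 2 ≤ ∑ _i : Fin m, (2 * bp m)^2 := by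
    apply Finset.sum_le_sum
    intro i _
    have h := a_bounds hε hn v i
    have h0 : 0 ≤ bp m + ((v i : ℕ) : ℝ) * ε := le_trans (bp_pos m).le h.1
    nlinarith [h.1, h.2]
  have h2 : ∑ _i : Fin m, (2 * bp m)^2 = m * (2 * bp m)^2 := by
    simp [Finset.sum_const, Finset.card_univ, nsmul_eq_mul]
  rw [h2] at h1
  have h3 : (m:ℝ) * (2 * bp m)^2 ≤ 1/4 := by
    rw [bp]
    have hm : (0:ℝ) ≤ (m:ℝ) := Nat.cast_nonneg m
    have hd : (0:ℝ) < 2 * ((m:ℝ)+1) := by positivity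
    have key : (m:ℝ) * (2 * (1 / (2 * ((m:ℝ)+1))))^2 = (m:ℝ) / ((m:ℝ)+1)^2 := by
      field_simp
    rw [key, div_le_div_iff₀ (by positivity) (by norm_num)]
    nlinarith [sq_nonneg ((m:ℝ) - 1)]
  linarith

end Grid
section Grid2

variable {m n : ℕ} {ε : ℝ}

lemma gp_sumsq (hε : 0 < ε) (hn : ((n:ℝ) - 1) * ε ≤ bp m) (v : Fin m → Fin n) :
    ∑ i, (gp m n ε v i) ^ 2 = 1 := by
  have hS := S_bound hε hn v
  set S := ∑ i, (bp m + ((v i : ℕ) : ℝ) * ε) ^ 2 with hSdef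
  have h1 : (0:ℝ) ≤ 1 - S := by linarith
  rw [Fin.sum_univ_castSucc]
  have hc : ∀ i : Fin m, gp m n ε v i.castSucc = bp m + ((v i : ℕ) : ℝ) * ε := by
    intro i; simp [gp]
  have hl : gp m n ε v (Fin.last m) = Real.sqrt (1 - S) := by
    simp [gp]; rfl
  rw [hl, Real.sq_sqrt h1]
  have : ∑ i : Fin m, (gp m n ε v i.castSucc) ^ 2 = S := by
    rw [hSdef]
    exact Finset.sum_congr rfl fun i _ => by rw [hc i]
  rw [this]; ring

lemma gp_lower (hε : 0 < ε) (hn : ((n:ℝ) - 1) * ε ≤ bp m) (v : Fin m → Fin n) (i : Fin (m+1)) :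
    bp m ≤ gp m n ε v i := by
  induction i using Fin.lastCases with
  | last =>
    have hS := S_bound hε hn v
    simp only [gp, Fin.snoc_last]
    have h2 : bp m ≤ 1/2 := bp_le_half m
    have : (1:ℝ)/2 ≤ Real.sqrt (1 - ∑ i, (bp m + ((v i : ℕ) : ℝ) * ε) ^ 2) := by
      rw [Real.le_sqrt' (by norm_num)]
      norm_num
      linarith
    linarith
  | cast i =>
    have := (a_bounds hε hn v i).1
    simpa [gp] using this

lemma gp_upper (hε : 0 < ε) (hn : ((n:ℝ) - 1) * ε ≤ bp m) (v : Fin m → Fin n) (i : Fin (m+1)) :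
    gp m n ε v i ≤ 1 := by
  induction i using Fin.lastCases with
  | last =>
    simp only [gp, Fin.snoc_last]
    have h1 : Real.sqrt (1 - ∑ i, (bp m + ((v i : ℕ) : ℝ) * ε) ^ 2) ≤ Real.sqrt 1 := by
      apply Real.sqrt_le_sqrt
      have hS : 0 ≤ ∑ i, (bp m + ((v i : ℕ) : ℝ) * ε) ^ 2 := by positivity
      linarith
    rw [Real.sqrt_one] at h1
    exact h1
  | cast i =>
    have := (a_bounds hε hn v i).2
    have hb := bp_le_half m
    simp only [gp, Fin.snoc_castSucc]
    linarith

end Grid2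
section Key

variable {m n : ℕ} {ε η : ℝ}

/-- Key geometric bound: a point in the unit ball dominating `gp v - η` is
coordinatewise not much above `gp v`. -/
lemma key_bound (hε : 0 < ε) (hn : ((n:ℝ) - 1) * ε ≤ bp m)
    (hη : 0 < η) (hηβ : η ≤ bp m) (v : Fin m → Fin n) (y : Fin (m+1) → ℝ)
    (hy0 : ∀ i, 0 ≤ y i) (hy1 : ∑ i, (y i) ^ 2 ≤ 1)
    (hcov : ∀ i, gp m n ε v i - η ≤ y i) (j : Fin (m+1)) :
    y j ≤ gp m n ε v j + η * (m+1) / bp m := by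
  set p := gp m n ε v with hp
  have hβ := bp_pos m
  have hp1 : ∑ i, (p i) ^ 2 = 1 := gp_sumsq hε hn v
  have hpb : ∀ i, bp m ≤ p i := gp_lower hε hn v
  have hpu : ∀ i, p i ≤ 1 := gp_upper hε hn v
  -- squares dominate
  have h1 : ∀ i, (p i - η)^2 ≤ (y i)^2 := fun i =>
    pow_le_pow_left₀ (by linarith [hpb i]) (hcov i) 2
  have e1 : ∑ i ∈ Finset.univ.erase j, (y i)^2 = (∑ i, (y i)^2) - (y j)^2 :=
    Finset.sum_erase_eq_sub (Finset.mem_univ j)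
  have e2 : ∑ i ∈ Finset.univ.erase j, (p i - η)^2
      = (∑ i, (p i - η)^2) - (p j - η)^2 :=
    Finset.sum_erase_eq_sub (Finset.mem_univ j)
  have hsum1 : ∑ i ∈ Finset.univ.erase j, (p i - η)^2
      ≤ ∑ i ∈ Finset.univ.erase j, (y i)^2 :=
    Finset.sum_le_sum fun i _ => h1 i
  -- lower bound on full sum of (p i - η)^2
  have h2 : 1 - 2 * η * (m+1) ≤ ∑ i, (p i - η)^2 := by
    have step : ∀ i : Fin (m+1), (p i)^2 - 2*η*(p i) ≤ (p i - η)^2 := by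
      intro i; nlinarith [sq_nonneg η]
    have hsp : ∑ i, ((p i)^2 - 2*η*(p i)) ≤ ∑ i, (p i - η)^2 :=
      Finset.sum_le_sum fun i _ => step i
    have hsplit : ∑ i, ((p i)^2 - 2*η*(p i))
        = (∑ i, (p i)^2) - 2*η*(∑ i, p i) := by
      rw [Finset.sum_sub_distrib, ← Finset.mul_sum]
    have hps : ∑ i, p i ≤ (m+1 : ℝ) := by
      calc ∑ i, p i ≤ ∑ _i : Fin (m+1), (1:ℝ) := Finset.sum_le_sum fun i _ => hpu i
        _ = (m+1 : ℝ) := by simp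
    have : 2*η*(∑ i, p i) ≤ 2*η*(m+1) := by
      apply mul_le_mul_of_nonneg_left hps (by positivity)
    rw [hsplit, hp1] at hsp
    linarith
  -- combine
  have hyj2 : (y j)^2 ≤ (p j)^2 + 2 * η * (m+1) := by
    have hpη : (p j - η)^2 ≤ (p j)^2 := by nlinarith [hpb j]
    have := hsum1
    rw [e1, e2] at this
    nlinarith
  -- conclude
  set D := η * (m+1) / bp m with hD
  have hD0 : 0 < D := by positivity
  have hDb : 2 * η * (m+1) ≤ 2 * (p j) * D := by
    have h3 : bp m * D = η * (m+1) := by rw [hD]; field_simp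
    have h4 : bp m * D ≤ p j * D := mul_le_mul_of_nonneg_right (hpb j) hD0.le
    nlinarith
  have hq : (y j)^2 ≤ (p j + D)^2 := by nlinarith
  nlinarith [hy0 j, hpb j]

/-- Each admissible point covers at most one grid cell. -/
lemma covers_inj (hε : 0 < ε) (hn : ((n:ℝ) - 1) * ε ≤ bp m)
    (hη : 0 < η) (hηβ : η ≤ bp m) (hD4 : η * (m+1) / bp m ≤ ε/4) (hη4 : η ≤ ε/4)
    (v v' : Fin m → Fin n) (y : Fin (m+1) → ℝ)
    (hy0 : ∀ i, 0 ≤ y i) (hy1 : ∑ i, (y i) ^ 2 ≤ 1)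
    (hcov : ∀ i, gp m n ε v i - η ≤ y i) (hcov' : ∀ i, gp m n ε v' i - η ≤ y i) :
    v = v' := by
  funext i
  by_contra hne
  have hne' : (v i : ℕ) ≠ (v' i : ℕ) := fun h => hne (Fin.ext h)
  have habs := nat_cast_abs_ge hne'
  have hk := key_bound hε hn hη hηβ v y hy0 hy1 hcov i.castSucc
  have hk' := key_bound hε hn hη hηβ v' y hy0 hy1 hcov' i.castSucc
  have hc : gp m n ε v i.castSucc = bp m + ((v i : ℕ) : ℝ) * ε := by simp [gp]
  have hc' : gp m n ε v' i.castSucc = bp m + ((v' i : ℕ) : ℝ) * ε := by simp [gp]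
  have h1 := hcov i.castSucc
  have h1' := hcov' i.castSucc
  rw [hc] at hk h1
  rw [hc'] at hk' h1'
  -- |v i - v' i| * ε ≤ ε/2 < ε, contradiction with |v i - v' i| ≥ 1
  have hub : |((v i : ℕ) : ℝ) - ((v' i : ℕ) : ℝ)| * ε ≤ ε/2 := by
    rcases abs_cases (((v i : ℕ) : ℝ) - ((v' i : ℕ) : ℝ)) with ⟨h,_⟩ | ⟨h,_⟩ <;>
      rw [h] <;> nlinarith
  have : ε ≤ |((v i : ℕ) : ℝ) - ((v' i : ℕ) : ℝ)| * ε := by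
    nlinarith
  linarith

end Key
section Sets

lemma sumsq_le_one_of_euclNorm {k : ℕ} {y : Fin k → ℝ} (h : euclNorm y ≤ 1) :
    ∑ i, (y i) ^ 2 ≤ 1 := by
  have hS : (0:ℝ) ≤ ∑ i, (y i)^2 := by positivity
  have := Real.sq_sqrt hS
  rw [euclNorm] at h
  nlinarith [Real.sqrt_nonneg (∑ i, (y i)^2)]

lemma sumsq_eq_one_of_euclNorm {k : ℕ} {y : Fin k → ℝ} (h : euclNorm y = 1) :
    ∑ i, (y i) ^ 2 = 1 := by
  have hS : (0:ℝ) ≤ ∑ i, (y i)^2 := by positivity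
  have := Real.sq_sqrt hS
  rw [euclNorm] at h
  rw [h] at this
  linarith

lemma mem_DS {k : ℕ} (hk : 0 < k) (x : Fin k → ℝ) (hx0 : ∀ i, 0 ≤ x i)
    (hx1 : euclNorm x ≤ 1) : x ∈ dominatedRegion0 (spherePlus k) := by
  refine ⟨hx0, ?_⟩
  rcases eq_or_lt_of_le (Real.sqrt_nonneg (∑ i, (x i)^2)) with ht0 | ht0
  · -- x = 0
    refine ⟨fun i => if i = ⟨0, hk⟩ then 1 else 0, ⟨?_, ?_⟩, ?_⟩
    · rw [euclNorm]
      have : ∑ i : Fin k, (if i = ⟨0, hk⟩ then (1:ℝ) else 0) ^ 2 = 1 := by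
        rw [Finset.sum_eq_single ⟨0, hk⟩]
        · simp
        · intro b _ hb; simp [hb]
        · intro h; exact absurd (Finset.mem_univ _) h
      rw [this, Real.sqrt_one]
    · intro i; dsimp only; split <;> norm_num
    · intro i
      have hS : ∑ j, (x j)^2 = 0 := by
        have h0 : Real.sqrt (∑ j, (x j)^2) = 0 := ht0.symm
        have hS0 : (0:ℝ) ≤ ∑ j, (x j)^2 := by positivity
        nlinarith [Real.sq_sqrt hS0]
      have hxi : (x i)^2 = 0 := by
        have : ∀ j ∈ Finset.univ, (0:ℝ) ≤ (x j)^2 := fun j _ => sq_nonneg _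
        have := (Finset.sum_eq_zero_iff_of_nonneg this).mp hS i (Finset.mem_univ i)
        exact this
      have : x i = 0 := by nlinarith
      rw [this]; dsimp only; split <;> norm_num
  · -- x ≠ 0, scale up
    set t := Real.sqrt (∑ i, (x i)^2) with htdef
    have ht1 : t ≤ 1 := hx1
    refine ⟨fun i => x i / t, ⟨?_, ?_⟩, ?_⟩
    · rw [euclNorm]
      have hS0 : (0:ℝ) ≤ ∑ i, (x i)^2 := by positivity
      have ht2 : t^2 = ∑ i, (x i)^2 := Real.sq_sqrt hS0
      have : ∑ i, (x i / t)^2 = (∑ i, (x i)^2) / t^2 := by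
        rw [Finset.sum_div]
        exact Finset.sum_congr rfl fun i _ => by rw [div_pow]
      rw [this, ← ht2, div_self (by positivity), Real.sqrt_one]
    · intro i; exact div_nonneg (hx0 i) ht0.le
    · intro i
      show x i ≤ x i / t
      rw [le_div_iff₀ ht0]
      nlinarith [hx0 i]
lemma DY_eq {k : ℕ} (YT : Finset (Fin k → ℝ)) :
    dominatedRegion0 (↑YT : Set (Fin k → ℝ)) = ⋃ y ∈ YT, Set.Icc 0 y := by
  ext x
  simp only [dominatedRegion0, Set.mem_setOf_eq, Set.mem_iUnion, Set.mem_Icc,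
    Pi.le_def, Finset.mem_coe, exists_prop]
  constructor
  · rintro ⟨h0, y, hy, hle⟩
    exact ⟨y, hy, fun i => h0 i, hle⟩
  · rintro ⟨y, hy, h0, hle⟩
    exact ⟨fun i => h0 i, y, hy, hle⟩

lemma DS_subset {k : ℕ} :
    dominatedRegion0 (spherePlus k) ⊆ Set.Icc (0 : Fin k → ℝ) 1 := by
  rintro x ⟨h0, s, ⟨hs1, hs0⟩, hle⟩
  have hsum := sumsq_eq_one_of_euclNorm hs1
  constructor
  · intro i; exact h0 i
  · intro i
    have h1 : (s i)^2 ≤ 1 := by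
      have : (s i)^2 ≤ ∑ j, (s j)^2 :=
        Finset.single_le_sum (fun j _ => sq_nonneg (s j)) (Finset.mem_univ i)
      linarith
    have : s i ≤ 1 := by nlinarith [hs0 i]
    calc x i ≤ s i := hle i
      _ ≤ 1 := this

end Sets
set_option maxHeartbeats 1000000 in
theorem stmt_12 {k : ℕ} (hk : 0 < k) :
    ∃ c : ℝ, 0 < c ∧
      ∀ ε : ℝ, 0 < ε → ε < 1 / 2 →
        ∀ YT : Finset (Fin k → ℝ),
          (↑YT : Set (Fin k → ℝ)) ⊆ {y | (∀ i, 0 ≤ y i) ∧ euclNorm y ≤ 1} →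
          (YT.card : ℝ) < c * (1 / ε) ^ (k - 1) →
          (volume (dominatedRegion0 (spherePlus k))).toReal -
              (volume (dominatedRegion0 (↑YT : Set (Fin k → ℝ)))).toReal ≥ c * ε := by
  classical
  obtain ⟨m, rfl⟩ : ∃ m, k = m + 1 := ⟨k - 1, (Nat.succ_pred_eq_of_pos hk).symm⟩
  have hβ0 : 0 < bp m := bp_pos m
  have hβh : bp m ≤ 1/2 := bp_le_half m
  have hm1 : (1:ℝ) ≤ (m:ℝ) + 1 := by
    have : (0:ℝ) ≤ (m:ℝ) := Nat.cast_nonneg m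
    linarith
  set c : ℝ := bp m ^ m * (bp m / (8 * ((m:ℝ) + 1))) ^ (m + 1) / 2 with hc_def
  have hc0 : 0 < c := by
    apply div_pos _ two_pos
    exact mul_pos (pow_pos hβ0 m) (pow_pos (div_pos hβ0 (by positivity)) _)
  refine ⟨c, hc0, ?_⟩
  intro ε hε hε2 YT hYT hcard
  rw [Nat.add_sub_cancel] at hcard
  set n : ℕ := Nat.floor (bp m / ε) + 1 with hn_def
  have hn : ((n:ℝ) - 1) * ε ≤ bp m := by
    have h1 : ((Nat.floor (bp m / ε) : ℝ)) ≤ bp m / ε := Nat.floor_le (by positivity)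
    have h2 : ((n:ℝ) - 1) = (Nat.floor (bp m / ε) : ℝ) := by
      rw [hn_def]; push_cast; ring
    rw [h2]
    calc (Nat.floor (bp m / ε) : ℝ) * ε ≤ (bp m / ε) * ε :=
          mul_le_mul_of_nonneg_right h1 hε.le
      _ = bp m := by field_simp
  have hnlb : bp m / ε < (n:ℝ) := by
    have := Nat.lt_floor_add_one (bp m / ε)
    rw [hn_def]; push_cast; linarith
  set η : ℝ := ε * bp m / (8 * ((m:ℝ) + 1)) with hη_def
  have hη : 0 < η := by positivity
  have hηβ : η ≤ bp m := by
    rw [hη_def, div_le_iff₀ (by positivity)]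
    nlinarith
  have hD4 : η * ((m:ℝ)+1) / bp m ≤ ε/4 := by
    rw [hη_def]
    rw [div_mul_eq_mul_div, div_div, div_le_iff₀ (by positivity)]
    have h0 : 0 ≤ ε * bp m * ((m:ℝ)+1) := by positivity
    nlinarith
  have hη4 : η ≤ ε/4 := by
    rw [hη_def, div_le_iff₀ (by positivity)]
    nlinarith
  have hηε : η < ε := lt_of_le_of_lt hη4 (by linarith)
  -- the points of YT are in the unit ball
  have hYT' : ∀ y ∈ YT, (∀ i, 0 ≤ y i) ∧ ∑ i, (y i)^2 ≤ 1 := by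
    intro y hy
    obtain ⟨h0, h1⟩ := hYT hy
    exact ⟨h0, sumsq_le_one_of_euclNorm h1⟩
  -- covering predicate
  set P : (Fin m → Fin n) → Prop := fun v => ∃ y ∈ YT, ∀ i, gp m n ε v i - η ≤ y i with hP_def
  set cov := Finset.univ.filter P with hcov_def
  set uncov := Finset.univ.filter (fun v => ¬ P v) with huncov_def
  have hcards : cov.card + uncov.card = n ^ m := by
    rw [hcov_def, huncov_def, Finset.card_filter_add_card_filter_not,
      Finset.card_univ]
    simp [Fintype.card_fun]
  have hcov_le : cov.card ≤ YT.card := by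
    have hchoice : ∀ v ∈ cov, ∃ y, y ∈ YT ∧ ∀ i, gp m n ε v i - η ≤ y i := by
      intro v hv
      have := (Finset.mem_filter.mp hv).2
      obtain ⟨y, hy, hcy⟩ := this
      exact ⟨y, hy, hcy⟩
    choose f hf1 hf2 using hchoice
    classical
    apply Finset.card_le_card_of_injOn (fun v => if h : v ∈ cov then f v h else 0)
    · intro v hv; have hv' : v ∈ cov := hv; simp only [dif_pos hv']; exact hf1 v hv'
    · intro v hv v' hv' hff
      simp only [Finset.mem_coe] at hv hv'
      simp only [dif_pos hv, dif_pos hv'] at hff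
      have hy := hYT' _ (hf1 v hv)
      exact covers_inj hε hn hη hηβ hD4 hη4 v v' (f v hv) hy.1 hy.2
        (hf2 v hv) (by rw [hff]; exact hf2 v' hv')
  -- the boxes
  set B : (Fin m → Fin n) → Set (Fin (m+1) → ℝ) :=
    fun v => Set.Icc (fun i => gp m n ε v i - η) (gp m n ε v) with hB_def
  have hsep : ∀ v v' : Fin m → Fin n, v ≠ v' → Disjoint (B v) (B v') := by
    intro v v' hvv'
    obtain ⟨i, hi⟩ : ∃ i, v i ≠ v' i := by
      by_contra h
      push_neg at h
      exact hvv' (funext h)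
    have habs := nat_cast_abs_ge (fun h => hi (Fin.ext h))
    rw [Set.disjoint_left]
    rintro x ⟨hx1, hx2⟩ ⟨hx1', hx2'⟩
    have e1 : gp m n ε v i.castSucc = bp m + ((v i : ℕ) : ℝ) * ε := by simp [gp]
    have e1' : gp m n ε v' i.castSucc = bp m + ((v' i : ℕ) : ℝ) * ε := by simp [gp]
    have k1 := hx1 i.castSucc
    have k2 := hx2 i.castSucc
    have k1' := hx1' i.castSucc
    have k2' := hx2' i.castSucc
    simp only [e1, e1'] at k1 k2 k1' k2'
    have habsε : ε ≤ |((v i : ℕ) : ℝ) - ((v' i : ℕ) : ℝ)| * ε := by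
      calc ε = 1 * ε := (one_mul ε).symm
        _ ≤ _ := mul_le_mul_of_nonneg_right habs hε.le
    rcases abs_cases (((v i : ℕ) : ℝ) - ((v' i : ℕ) : ℝ)) with ⟨h, _⟩ | ⟨h, _⟩ <;>
      rw [h] at habsε <;> linarith
  have hBvol : ∀ v : Fin m → Fin n, volume (B v) = ENNReal.ofReal η ^ (m+1) := by
    intro v
    rw [hB_def]
    rw [Real.volume_Icc_pi]
    simp only [sub_sub_cancel]
    rw [Finset.prod_const, Finset.card_univ, Fintype.card_fin]
  set U : Set (Fin (m+1) → ℝ) := ⋃ v ∈ uncov, B v with hU_def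
  have hUvol : volume U = (uncov.card : ENNReal) * ENNReal.ofReal η ^ (m+1) := by
    rw [hU_def, measure_biUnion_finset ?_ (fun v _ => measurableSet_Icc)]
    · rw [Finset.sum_congr rfl (fun v _ => hBvol v), Finset.sum_const, nsmul_eq_mul]
    · intro v hv v' hv' hne
      exact hsep v v' hne
  -- U is inside the dominated region of the sphere
  have hUDS : U ⊆ dominatedRegion0 (spherePlus (m+1)) := by
    rintro x hx
    simp only [hU_def, Set.mem_iUnion] at hx
    obtain ⟨v, _, hx1, hx2⟩ := hx
    have hlow : ∀ i, gp m n ε v i - η ≤ x i := fun i => hx1 i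
    have hup : ∀ i, x i ≤ gp m n ε v i := fun i => hx2 i
    refine ⟨fun i => by linarith [gp_lower hε hn v i, hηβ, hlow i], ?_⟩
    refine ⟨gp m n ε v, ⟨?_, fun i => le_trans hβ0.le (gp_lower hε hn v i)⟩, hup⟩
    rw [euclNorm, gp_sumsq hε hn v, Real.sqrt_one]
  -- U is disjoint from the dominated region of YT
  have hUdisjY : Disjoint U (dominatedRegion0 (↑YT : Set (Fin (m+1) → ℝ))) := by
    rw [Set.disjoint_left]
    rintro x hx ⟨hx0, y, hy, hle⟩
    simp only [hU_def, Set.mem_iUnion] at hx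
    obtain ⟨v, hv, hx1, hx2⟩ := hx
    have hlow : ∀ i, gp m n ε v i - η ≤ x i := fun i => hx1 i
    have : P v := ⟨y, hy, fun i => le_trans (hlow i) (hle i)⟩
    have := (Finset.mem_filter.mp hv).2
    contradiction
  -- D_Y is inside D_S
  have hDYDS : dominatedRegion0 (↑YT : Set (Fin (m+1) → ℝ))
      ⊆ dominatedRegion0 (spherePlus (m+1)) := by
    rintro x ⟨hx0, y, hy, hle⟩
    obtain ⟨hy0, hy1⟩ := hYT hy
    apply mem_DS hk x hx0
    rw [euclNorm]
    refine le_trans ?_ hy1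
    rw [euclNorm]
    apply Real.sqrt_le_sqrt
    apply Finset.sum_le_sum
    intro i _
    have := hx0 i
    have := hle i
    have := hy0 i
    nlinarith
  -- measurability & finiteness
  have hDY_meas : MeasurableSet (dominatedRegion0 (↑YT : Set (Fin (m+1) → ℝ))) := by
    rw [DY_eq]
    exact YT.measurableSet_biUnion (fun y _ => measurableSet_Icc)
  have hU_meas : MeasurableSet U :=
    uncov.measurableSet_biUnion (fun v _ => measurableSet_Icc)
  have hDS_le_one : volume (dominatedRegion0 (spherePlus (m+1))) ≤ 1 := by
    calc volume (dominatedRegion0 (spherePlus (m+1)))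
        ≤ volume (Set.Icc (0 : Fin (m+1) → ℝ) 1) := measure_mono DS_subset
      _ = 1 := by rw [Real.volume_Icc_pi]; simp
  have hsub : dominatedRegion0 (↑YT : Set (Fin (m+1) → ℝ)) ∪ U
      ⊆ dominatedRegion0 (spherePlus (m+1)) := Set.union_subset hDYDS hUDS
  have hunion : volume (dominatedRegion0 (↑YT : Set (Fin (m+1) → ℝ)) ∪ U)
      = volume (dominatedRegion0 (↑YT : Set (Fin (m+1) → ℝ))) + volume U :=
    measure_union hUdisjY.symm hU_meas
  have hle_total : volume (dominatedRegion0 (↑YT : Set (Fin (m+1) → ℝ))) + volume U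
      ≤ volume (dominatedRegion0 (spherePlus (m+1))) := by
    rw [← hunion]; exact measure_mono hsub
  -- convert to real numbers
  have hDS_ne : volume (dominatedRegion0 (spherePlus (m+1))) ≠ ⊤ :=
    ne_top_of_le_ne_top ENNReal.one_ne_top hDS_le_one
  have hDY_ne : volume (dominatedRegion0 (↑YT : Set (Fin (m+1) → ℝ))) ≠ ⊤ := by
    refine ne_top_of_le_ne_top hDS_ne (measure_mono hDYDS)
  have hU_ne : volume U ≠ ⊤ := by
    refine ne_top_of_le_ne_top hDS_ne (measure_mono hUDS)
  have hreal : (volume (dominatedRegion0 (spherePlus (m+1)))).toReal -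
      (volume (dominatedRegion0 (↑YT : Set (Fin (m+1) → ℝ)))).toReal
      ≥ (volume U).toReal := by
    have h1 : (volume (dominatedRegion0 (↑YT : Set (Fin (m+1) → ℝ))) + volume U).toReal
        ≤ (volume (dominatedRegion0 (spherePlus (m+1)))).toReal :=
      ENNReal.toReal_mono hDS_ne hle_total
    rw [ENNReal.toReal_add hDY_ne hU_ne] at h1
    linarith
  -- compute the volume of U in real numbers
  have hUreal : (volume U).toReal = (uncov.card : ℝ) * η ^ (m+1) := by
    rw [hUvol, ENNReal.toReal_mul, ENNReal.toReal_pow,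
      ENNReal.toReal_ofReal hη.le, ENNReal.toReal_natCast]
  -- counting
  have hNn : ((n:ℝ))^m ≥ (bp m / ε)^m := by
    apply pow_le_pow_left₀ (by positivity) hnlb.le
  have huncov_card : ((uncov.card : ℝ)) ≥ (n:ℝ)^m - (YT.card : ℝ) := by
    have h1 : (cov.card : ℝ) + (uncov.card : ℝ) = ((n^m : ℕ) : ℝ) := by
      exact_mod_cast congrArg (Nat.cast (R := ℝ)) hcards
    have h2 : (cov.card : ℝ) ≤ (YT.card : ℝ) := by exact_mod_cast hcov_le
    rw [Nat.cast_pow] at h1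
    linarith
  -- final arithmetic
  have hpow_le_one : (bp m / (8 * ((m:ℝ) + 1))) ^ (m + 1) ≤ 1 := by
    apply pow_le_one₀ (by positivity)
    rw [div_le_one (by positivity)]
    nlinarith
  have hc_le : c * (1/ε)^m ≤ (bp m ^ m / 2) * (1/ε)^m := by
    apply mul_le_mul_of_nonneg_right _ (by positivity)
    rw [hc_def]
    rw [div_le_div_iff₀ (by norm_num) (by norm_num)]
    nlinarith [pow_pos hβ0 m, pow_nonneg hβ0.le m,
      mul_le_mul_of_nonneg_left hpow_le_one (pow_nonneg hβ0.le m)]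
  have hNlb : (bp m ^ m) * (1/ε)^m ≤ (n:ℝ)^m := by
    have : (bp m / ε)^m = bp m ^ m * (1/ε)^m := by
      rw [div_pow, one_div, inv_pow, div_eq_mul_inv]
    linarith [hNn]
  have huncov_lb : ((uncov.card : ℝ)) ≥ (bp m ^ m / 2) * (1/ε)^m := by
    have := hcard
    nlinarith [huncov_card, hNlb, hc_le]
  have hηpow : η ^ (m+1) = ε^(m+1) * (bp m / (8 * ((m:ℝ) + 1))) ^ (m + 1) := by
    rw [← mul_pow, hη_def]
    congr 1
    field_simp
  have hεpow : (1/ε)^m * ε^(m+1) = ε := by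
    rw [pow_succ, ← mul_assoc, ← mul_pow]
    rw [one_div, inv_mul_cancel₀ hε.ne']
    simp
  have hfinal : (uncov.card : ℝ) * η ^ (m+1) ≥ c * ε := by
    have h1 : (uncov.card : ℝ) * η ^ (m+1)
        ≥ ((bp m ^ m / 2) * (1/ε)^m) * η ^ (m+1) :=
      mul_le_mul_of_nonneg_right huncov_lb (by positivity)
    have h2 : ((bp m ^ m / 2) * (1/ε)^m) * η ^ (m+1) = c * ε := by
      rw [hηpow, hc_def]
      calc (bp m ^ m / 2) * (1/ε)^m * (ε^(m+1) * (bp m / (8 * ((m:ℝ) + 1))) ^ (m + 1))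
          = (bp m ^ m * (bp m / (8 * ((m:ℝ) + 1))) ^ (m + 1) / 2) * ((1/ε)^m * ε^(m+1)) := by
            ring
        _ = (bp m ^ m * (bp m / (8 * ((m:ℝ) + 1))) ^ (m + 1) / 2) * ε := by rw [hεpow]
    linarith
  calc (volume (dominatedRegion0 (spherePlus (m+1)))).toReal -
      (volume (dominatedRegion0 (↑YT : Set (Fin (m+1) → ℝ)))).toReal
      ≥ (volume U).toReal := hreal
    _ = (uncov.card : ℝ) * η ^ (m+1) := hUreal
    _ ≥ c * ε := hfinal
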